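/- For all integers n ≥ 3 and 1 ≤ m ≤ ⌊(n−1)/2⌋, the generalised Petersen graph P(n,m) admits a super vertex-antimagic total labeling, i.e. a bijection f : V ∪ E → {1,...,5n} with f(V)={1,...,2n} such that all vertex-weights f(v)+Σ_{u∈N(v)} f(uv) are pairwise distinct. -/

import Mathlib

open Sum
open Fin.NatCast

/-- The weight of an edge `e` under a total labeling `f` of the graph `G`:
the label of `e` plus the labels of its two endpoints. -/
noncomputable def edgeWt {V : Type*} (G : SimpleGraph V) (f : V ⊕ G.edgeSet → ℕ)
    (e : G.edgeSet) : ℕ :=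
  f (inr e) + ∑ᶠ (v : V) (_ : v ∈ (e : Sym2 V)), f (inl v)

/-- The weight of a vertex `v` under a total labeling `f` of the graph `G`:
the label of `v` plus the labels of all edges incident with `v`. -/
noncomputable def vertexWt {V : Type*} (G : SimpleGraph V) (f : V ⊕ G.edgeSet → ℕ)
    (v : V) : ℕ :=
  f (inl v) + ∑ᶠ (e : G.edgeSet) (_ : v ∈ (e : Sym2 V)), f (inr e)

/-- The generalised Petersen graph `P(n,m)`, with outer vertices `u_i = inl i` and
inner vertices `v_i = inr i` (`i` running over `Fin n`), outer cycle edges `u_i u_{i+1}`,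
spokes `u_i v_i`, and inner edges `v_i v_{i+m}` (indices mod `n`). -/
def petersen (n m : ℕ) : SimpleGraph (Fin n ⊕ Fin n) :=
  SimpleGraph.fromRel (fun a b =>
    (∃ p q : Fin n, ((p : ℕ) + 1) % n = (q : ℕ) ∧ a = inl p ∧ b = inl q) ∨
    (∃ p q : Fin n, ((p : ℕ) + m) % n = (q : ℕ) ∧ a = inr p ∧ b = inr q) ∨
    (∃ p : Fin n, a = inl p ∧ b = inr p))

lemma modCases (a k n : ℕ) (h : a + k < 2 * n) :
    (a + k) % n = a + k ∧ a + k < n ∨ (a + k) % n = a + k - n ∧ n ≤ a + k := by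
  rcases lt_or_ge (a + k) n with h' | h'
  · exact Or.inl ⟨Nat.mod_eq_of_lt h', h'⟩
  · refine Or.inr ⟨?_, h'⟩
    rw [Nat.mod_eq_sub_mod h', Nat.mod_eq_of_lt (by omega)]

section
variable (n m : ℕ) [NeZero n] (hn : 3 ≤ n) (hm1 : 1 ≤ m) (hmn : m + m + 1 ≤ n)
include hn

lemma val_add_one (i : Fin n) : ((i + 1 : Fin n) : ℕ) = ((i : ℕ) + 1) % n := by
  simp only [Fin.add_def, Fin.val_one']
  rw [Nat.one_mod_eq_one.mpr (by omega)]

include hm1 hmn in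
lemma val_add_m (i : Fin n) : ((i + (m : Fin n) : Fin n) : ℕ) = ((i : ℕ) + m) % n := by
  rw [Fin.add_def, Fin.val_cast_of_lt (show m < n by omega)]

include hm1 hmn in
lemma petersen_edgeEquiv : Nonempty ((petersen n m).edgeSet ≃ Fin (3 * n)) := by
  have hm : m < n := by omega
  -- adjacency facts
  have adj_outer : ∀ i : Fin n, (petersen n m).Adj (inl i) (inl (i + 1)) := by
    intro i
    rw [petersen, SimpleGraph.fromRel_adj]
    constructor
    · intro h
      have h2 : (i : ℕ) = ((i + 1 : Fin n) : ℕ) := by rw [inl.injEq] at h; rw [← h]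
      rw [val_add_one n hn] at h2
      rcases modCases (i : ℕ) 1 n (by omega) with ⟨h3, h4⟩ | ⟨h3, h4⟩ <;> omega
    · exact Or.inl (Or.inl ⟨i, i + 1, (val_add_one n hn i).symm, rfl, rfl⟩)
  have adj_spoke : ∀ i : Fin n, (petersen n m).Adj (inl i) (inr i) := by
    intro i
    rw [petersen, SimpleGraph.fromRel_adj]
    exact ⟨by simp, Or.inl (Or.inr (Or.inr ⟨i, rfl, rfl⟩))⟩
  have adj_inner : ∀ i : Fin n, (petersen n m).Adj (inr i) (inr (i + (m : Fin n))) := by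
    intro i
    rw [petersen, SimpleGraph.fromRel_adj]
    constructor
    · intro h
      have h2 : (i : ℕ) = ((i + (m : Fin n) : Fin n) : ℕ) := by rw [inr.injEq] at h; rw [← h]
      rw [val_add_m n m hn hm1 hmn] at h2
      rcases modCases (i : ℕ) m n (by omega) with ⟨h3, h4⟩ | ⟨h3, h4⟩ <;> omega
    · exact Or.inl (Or.inr (Or.inl ⟨i, i + (m : Fin n), (val_add_m n m hn hm1 hmn i).symm, rfl, rfl⟩))
  -- the enumeration
  let F : Fin n ⊕ (Fin n ⊕ Fin n) → (petersen n m).edgeSet :=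
    Sum.elim (fun i => ⟨s(inl i, inl (i + 1)), (petersen n m).mem_edgeSet.mpr (adj_outer i)⟩)
      (Sum.elim (fun i => ⟨s(inl i, inr i), (petersen n m).mem_edgeSet.mpr (adj_spoke i)⟩)
        (fun i => ⟨s(inr i, inr (i + (m : Fin n))), (petersen n m).mem_edgeSet.mpr (adj_inner i)⟩))
  have hinj : Function.Injective F := by
    intro x y h
    rw [Subtype.ext_iff] at h
    rcases x with i | i | i <;> rcases y with j | j | j <;>
      simp only [F, Sum.elim_inl, Sum.elim_inr, Sym2.eq_iff, inl.injEq, inr.injEq,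
        reduceCtorEq, false_and, and_false, or_self, false_or, or_false, and_self] at h
    -- outer/outer
    · rcases h with ⟨h1, _⟩ | ⟨h1, h2⟩
      · rw [h1]
      · exfalso
        have e1 : (i : ℕ) = ((j : ℕ) + 1) % n := by
          rw [← val_add_one n hn j, h1]
        have e2 : (j : ℕ) = ((i : ℕ) + 1) % n := by
          rw [← val_add_one n hn i, ← h2]
        rcases modCases (j : ℕ) 1 n (by omega) with ⟨h3, _⟩ | ⟨h3, h4⟩ <;>
          rcases modCases (i : ℕ) 1 n (by omega) with ⟨h5, _⟩ | ⟨h5, h6⟩ <;> omega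
    -- spoke/spoke
    · rw [h]
    -- inner/inner
    · rcases h with ⟨h1, _⟩ | ⟨h1, h2⟩
      · rw [h1]
      · exfalso
        have e1 : (i : ℕ) = ((j : ℕ) + m) % n := by
          rw [← val_add_m n m hn hm1 hmn j, h1]
        have e2 : (j : ℕ) = ((i : ℕ) + m) % n := by
          rw [← val_add_m n m hn hm1 hmn i, ← h2]
        have hi := i.isLt
        have hj := j.isLt
        rcases modCases (j : ℕ) m n (by omega) with ⟨h3, _⟩ | ⟨h3, h4⟩ <;>
          rcases modCases (i : ℕ) m n (by omega) with ⟨h5, _⟩ | ⟨h5, h6⟩ <;> omega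
  have hsurj : Function.Surjective F := by
    rintro ⟨e, he⟩
    induction e using Sym2.ind with
    | _ a b =>
      rw [SimpleGraph.mem_edgeSet, petersen, SimpleGraph.fromRel_adj] at he
      obtain ⟨-, hr⟩ := he
      have key : ∀ c d : Fin n ⊕ Fin n,
          ((∃ p q : Fin n, ((p : ℕ) + 1) % n = (q : ℕ) ∧ c = inl p ∧ d = inl q) ∨
           (∃ p q : Fin n, ((p : ℕ) + m) % n = (q : ℕ) ∧ c = inr p ∧ d = inr q) ∨
           (∃ p : Fin n, c = inl p ∧ d = inr p)) → ∃ x, (F x : Sym2 (Fin n ⊕ Fin n)) = s(c, d) := by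
        rintro c d (⟨p, q, hpq, rfl, rfl⟩ | ⟨p, q, hpq, rfl, rfl⟩ | ⟨p, rfl, rfl⟩)
        · refine ⟨inl p, ?_⟩
          have : p + 1 = q := by
            apply Fin.ext; rw [val_add_one n hn, hpq]
          simp [F, this]
        · refine ⟨inr (inr p), ?_⟩
          have : p + (m : Fin n) = q := by
            apply Fin.ext; rw [val_add_m n m hn hm1 hmn, hpq]
          simp [F, this]
        · exact ⟨inr (inl p), rfl⟩
      rcases hr with hr | hr
      · obtain ⟨x, hx⟩ := key a b hr
        exact ⟨x, Subtype.ext hx⟩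
      · obtain ⟨x, hx⟩ := key b a hr
        exact ⟨x, Subtype.ext (by rw [hx, Sym2.eq_swap])⟩
  exact ⟨((Equiv.ofBijective F ⟨hinj, hsurj⟩).symm).trans
    (((Equiv.sumCongr (Equiv.refl (Fin n)) finSumFinEquiv).trans finSumFinEquiv).trans
      (finCongr (by omega)))⟩

end


/-- For all `n ≥ 3` and `1 ≤ m ≤ ⌊(n-1)/2⌋` the generalised Petersen graph `P(n,m)`
admits a super vertex-antimagic total labeling. -/
theorem petersen_super_VAT (n m : ℕ) (hn : 3 ≤ n) (hm1 : 1 ≤ m) (hm2 : m ≤ (n - 1) / 2) :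
    ∃ f : (Fin n ⊕ Fin n) ⊕ (petersen n m).edgeSet → ℕ,
      Set.BijOn f Set.univ (Set.Icc 1 (5 * n)) ∧
      Set.BijOn (fun v => f (inl v)) Set.univ (Set.Icc 1 (2 * n)) ∧
      Function.Injective (vertexWt (petersen n m) f) := by
  classical
  haveI : NeZero n := ⟨by omega⟩
  obtain ⟨Ee⟩ := petersen_edgeEquiv n m hn hm1 (by omega)
  set G := petersen n m with hG
  set g : G.edgeSet → ℕ := fun e => 2 * n + 1 + (Ee e : ℕ) with hg
  set S : (Fin n ⊕ Fin n) → ℕ :=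
    fun v => ∑ᶠ (e : G.edgeSet) (_ : v ∈ (e : Sym2 (Fin n ⊕ Fin n))), g e with hS
  set vE0 : (Fin n ⊕ Fin n) ≃ Fin (2 * n) :=
    finSumFinEquiv.trans (finCongr (by omega)) with hvE0
  set T : Fin (2 * n) → ℕ := fun i => S (vE0.symm i) with hT
  set σ : Equiv.Perm (Fin (2 * n)) := Tuple.sort T with hσ
  set vE : (Fin n ⊕ Fin n) ≃ Fin (2 * n) := vE0.trans σ.symm with hvE
  refine ⟨Sum.elim (fun v => (vE v : ℕ) + 1) g, ⟨?_, ?_, ?_⟩, ⟨?_, ?_, ?_⟩, ?_⟩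
  · -- MapsTo
    rintro (v | e) -
    · have := (vE v).isLt
      simp only [Sum.elim_inl, Set.mem_Icc]; omega
    · have := (Ee e).isLt
      simp only [Sum.elim_inr, Set.mem_Icc, hg]; omega
  · -- InjOn
    rintro (v | e) - (w | d) - h
    · simp only [Sum.elim_inl, add_left_inj] at h
      rw [vE.injective (Fin.val_injective h)]
    · have := (vE v).isLt; have := (Ee d).isLt
      simp only [Sum.elim_inl, Sum.elim_inr, hg] at h; omega
    · have := (vE w).isLt; have := (Ee e).isLt
      simp only [Sum.elim_inl, Sum.elim_inr, hg] at h; omega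
    · simp only [Sum.elim_inr, hg, add_right_inj] at h
      rw [Ee.injective (Fin.val_injective h)]
  · -- SurjOn
    intro k hk
    simp only [Set.mem_Icc] at hk
    rcases le_or_gt k (2 * n) with hk2 | hk2
    · refine ⟨inl (vE.symm ⟨k - 1, by omega⟩), Set.mem_univ _, ?_⟩
      simp only [Sum.elim_inl, Equiv.apply_symm_apply]
      omega
    · refine ⟨inr (Ee.symm ⟨k - (2 * n + 1), by omega⟩), Set.mem_univ _, ?_⟩
      simp only [Sum.elim_inr, hg, Equiv.apply_symm_apply]
      omega
  · rintro v -
    have := (vE v).isLt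
    simp only [Sum.elim_inl, Set.mem_Icc]; omega
  · rintro v - w - h
    simp only [Sum.elim_inl, add_left_inj] at h
    rw [vE.injective (Fin.val_injective h)]
  · intro k hk
    simp only [Set.mem_Icc] at hk
    refine ⟨vE.symm ⟨k - 1, by omega⟩, Set.mem_univ _, ?_⟩
    simp only [Sum.elim_inl, Equiv.apply_symm_apply]
    omega
  · -- injectivity of vertex weights
    have hw : ∀ v, vertexWt G (Sum.elim (fun v => (vE v : ℕ) + 1) g) v
        = ((vE v : ℕ) + 1) + S v := by
      intro v; rfl
    have hSv : ∀ v, S v = T (σ (vE v)) := by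
      intro v
      have h1 : σ (vE v) = vE0 v := by
        simp [hvE]
      rw [h1]
      simp [hT]
    have hmono : StrictMono (fun i : Fin (2 * n) => (i : ℕ) + 1 + T (σ i)) := by
      intro i j hij
      have h1 : T (σ i) ≤ T (σ j) := Tuple.monotone_sort T hij.le
      have h2 : (i : ℕ) < (j : ℕ) := hij
      simp only
      omega
    intro a b hab
    rw [hw, hw, hSv, hSv] at hab
    have := hmono.injective hab
    exact vE.injective this
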